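/- Let T be a tree on a finite vertex type, let β and γ be real numbers, let H(T) = β·D(T) + γ·A(T), and let e = uv be an edge of T. Then per(x·I − H(T)) = per(x·I − H(T − e)) − β·per(x·I − H_v(T − e)) − β·per(x·I − H_u(T − e)) + (β² + γ²)·per(x·I − H_{uv}(T)), where per denotes the matrix permanent and H(T − e) = β·D(T − e) + γ·A(T − e). -/

import Mathlib

open Polynomial Matrix

attribute [local instance] Classical.propDecidable

noncomputable section

/-- The permanent of a square matrix: `per M = ∑_{σ} ∏_i M i (σ i)`. -/
def Matrix.per {n R : Type*} [Fintype n] [DecidableEq n] [CommRing R]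
    (M : Matrix n n R) : R :=
  ∑ σ : Equiv.Perm n, ∏ i, M i (σ i)

/-- The characteristic polynomial `φ(M) = det (x·I - M)`. -/
def phi {n R : Type*} [Fintype n] [DecidableEq n] [CommRing R]
    (M : Matrix n n (Polynomial R)) : Polynomial R :=
  ((Polynomial.X : Polynomial R) • (1 : Matrix n n (Polynomial R)) - M).det

/-- The permanental polynomial `ψ(M) = per (x·I - M)`. -/
def psi {n R : Type*} [Fintype n] [DecidableEq n] [CommRing R]
    (M : Matrix n n (Polynomial R)) : Polynomial R :=
  ((Polynomial.X : Polynomial R) • (1 : Matrix n n (Polynomial R)) - M).per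

variable {V : Type*}

/-- The principal submatrix of `M` obtained by deleting the rows and columns indexed by `S`. -/
def delSub {R : Type*} (M : Matrix V V R) (S : Set V) :
    Matrix {w : V // w ∉ S} {w : V // w ∉ S} R :=
  M.submatrix Subtype.val Subtype.val

/-- `C` is a cycle of `G`: a subgraph of `G` that is connected, has nonempty vertex set,
and in which every vertex of `C` has degree exactly `2` in `C`. -/
def IsCycleSub (G : SimpleGraph V) (C : G.Subgraph) : Prop :=
  C.Connected ∧ C.verts.Nonempty ∧ ∀ w ∈ C.verts, (C.neighborSet w).ncard = 2

variable [Fintype V] [DecidableEq V]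

/-- The degree diagonal matrix `D(G)` of a graph. -/
def degMat (R : Type*) [CommRing R] (G : SimpleGraph V) [DecidableRel G.Adj] :
    Matrix V V R :=
  Matrix.diagonal fun w => (G.degree w : R)

/-- The linear combination matrix `H(G) = β·D(G) + γ·A(G)` over `ℝ[x]`. -/
def hMat (β γ : ℝ) (G : SimpleGraph V) [DecidableRel G.Adj] :
    Matrix V V (Polynomial ℝ) :=
  Polynomial.C β • degMat (Polynomial ℝ) G + Polynomial.C γ • G.adjMatrix (Polynomial ℝ)

/-! ### Auxiliary lemmas about permanents -/

section PerLemmas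

variable {m n R : Type*} [Fintype m] [DecidableEq m] [Fintype n] [DecidableEq n] [CommRing R]

lemma per_submatrix_equiv (e : m ≃ n) (M : Matrix n n R) :
    (M.submatrix e e).per = M.per := by
  unfold Matrix.per
  refine Fintype.sum_equiv e.permCongr _ _ fun σ => ?_
  refine Fintype.prod_equiv e _ _ fun i => ?_
  simp [Equiv.permCongr_apply]

lemma per_submatrix_id_perm (e : Equiv.Perm n) (M : Matrix n n R) :
    (M.submatrix id ⇑e).per = M.per := by
  unfold Matrix.per
  refine Fintype.sum_equiv (Equiv.mulLeft e) _ _ fun σ => ?_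
  refine Finset.prod_congr rfl fun i _ => ?_
  simp [Equiv.Perm.mul_apply]

lemma per_updateRow_linear (M : Matrix n n R) (i : n) (c : n → R) :
    (M.updateRow i c).per =
      ∑ σ : Equiv.Perm n, c (σ i) * ∏ k ∈ Finset.univ.erase i, M k (σ k) := by
  unfold Matrix.per
  refine Finset.sum_congr rfl fun σ _ => ?_
  rw [← Finset.mul_prod_erase Finset.univ _ (Finset.mem_univ i), Matrix.updateRow_self]
  congr 1
  exact Finset.prod_congr rfl fun k hk => by
    rw [Matrix.updateRow_ne (Finset.ne_of_mem_erase hk)]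

lemma per_updateRow_sub (M : Matrix n n R) (i : n) (a b : n → R) :
    (M.updateRow i (a - b)).per = (M.updateRow i a).per - (M.updateRow i b).per := by
  simp only [per_updateRow_linear, ← Finset.sum_sub_distrib]
  exact Finset.sum_congr rfl fun σ _ => by simp [sub_mul]

lemma per_updateRow_add (M : Matrix n n R) (i : n) (a b : n → R) :
    (M.updateRow i (a + b)).per = (M.updateRow i a).per + (M.updateRow i b).per := by
  simp only [per_updateRow_linear, ← Finset.sum_add_distrib]
  exact Finset.sum_congr rfl fun σ _ => by simp [add_mul]

lemma per_updateRow_single_self (M : Matrix n n R) (i : n) (c : R) :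
    (M.updateRow i (Pi.single i c)).per = c * (delSub M ({i} : Set n)).per := by
  classical
  rw [per_updateRow_linear]
  rw [← Finset.sum_filter_add_sum_filter_not Finset.univ (fun σ : Equiv.Perm n => σ i = i)]
  have h2 : ∑ σ ∈ Finset.univ.filter (fun σ : Equiv.Perm n => ¬ σ i = i),
      (Pi.single i c : n → R) (σ i) * ∏ k ∈ Finset.univ.erase i, M k (σ k) = 0 := by
    refine Finset.sum_eq_zero fun σ hσ => ?_
    rw [Finset.mem_filter] at hσ
    rw [Pi.single_eq_of_ne hσ.2, zero_mul]
  rw [h2, add_zero]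
  unfold Matrix.per delSub
  rw [Finset.mul_sum]
  set p : n → Prop := fun w => w ∉ ({i} : Set n) with hp
  have hpi : ¬ p i := by simp [hp]
  refine Finset.sum_bij'
    (fun (σ : Equiv.Perm n) hσ => σ.subtypePerm (p := p) ?_)
    (fun (τ : Equiv.Perm {w : n // w ∉ ({i} : Set n)}) _ => Equiv.Perm.ofSubtype τ)
    ?_ ?_ ?_ ?_ ?_
  · intro x
    rw [Finset.mem_filter] at hσ
    simp only [hp, Set.mem_singleton_iff]
    constructor
    · intro hx hxi
      exact hx (by rw [hxi, hσ.2])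
    · intro hx hσx
      exact hx (by rw [← hσ.2] at hσx; exact σ.injective hσx)
  · intro σ hσ
    exact Finset.mem_univ _
  · intro τ _
    rw [Finset.mem_filter]
    exact ⟨Finset.mem_univ _, Equiv.Perm.ofSubtype_apply_of_not_mem τ hpi⟩
  · intro σ hσ
    rw [Finset.mem_filter] at hσ
    refine Equiv.Perm.ofSubtype_subtypePerm _ fun x hx => ?_
    simp only [hp, Set.mem_singleton_iff]
    intro hxi
    exact hx (by rw [hxi, hσ.2])
  · intro τ _
    exact Equiv.Perm.subtypePerm_ofSubtype τ
  · intro σ hσ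
    rw [Finset.mem_filter] at hσ
    rw [show (Pi.single i c : n → R) (σ i) = c by rw [hσ.2, Pi.single_eq_same]]
    congr 1
    rw [Finset.prod_subtype (Finset.univ.erase i)
      (p := fun w => w ∉ ({i} : Set n)) (by simp)]
    refine Finset.prod_congr rfl fun w _ => ?_
    simp only [Matrix.submatrix_apply]
    rfl

lemma per_eq_zero_aux (M : Matrix n n R) (S : Set n) (u v : n) (hu : u ∈ S) (hv : v ∉ S)
    (hrow : ∀ z, M u z ≠ 0 → z = v)
    (hS : ∀ w z, w ∉ S → M w z ≠ 0 → z ∉ S) :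
    M.per = 0 := by
  classical
  unfold Matrix.per
  refine Finset.sum_eq_zero fun σ _ => ?_
  by_contra hne
  have hall : ∀ k, M k (σ k) ≠ 0 := fun k hk =>
    hne (Finset.prod_eq_zero (Finset.mem_univ k) hk)
  have hσu : σ u = v := hrow _ (hall u)
  set s : Finset n := Finset.univ.filter (fun w => w ∉ S) with hs
  have hmaps : s.image σ ⊆ s := by
    intro z hz
    simp only [Finset.mem_image] at hz
    obtain ⟨w, hw, rfl⟩ := hz
    simp only [hs, Finset.mem_filter, Finset.mem_univ, true_and] at hw ⊢
    exact hS w _ hw (hall w)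
  have hcard : (s.image σ).card = s.card := Finset.card_image_of_injective _ σ.injective
  have himg : s.image σ = s := Finset.eq_of_subset_of_card_le hmaps (le_of_eq hcard.symm)
  have hv' : v ∈ s := by simp [hs, hv]
  rw [← himg] at hv'
  simp only [Finset.mem_image] at hv'
  obtain ⟨w, hw, hwv⟩ := hv'
  have hwu : w = u := σ.injective (hwv.trans hσu.symm)
  subst hwu
  simp [hs, hu] at hw

lemma per_pair_same_col (M : Matrix n n R) (i j k : n) (hij : i ≠ j) (c d : R) :
    ((M.updateRow i (Pi.single k c)).updateRow j (Pi.single k d)).per = 0 := by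
  unfold Matrix.per
  refine Finset.sum_eq_zero fun σ _ => ?_
  rcases eq_or_ne (σ i) k with h | h
  · refine Finset.prod_eq_zero (Finset.mem_univ j) ?_
    have hj : σ j ≠ k := fun hjk => hij (σ.injective (h.trans hjk.symm))
    rw [Matrix.updateRow_self, Pi.single_eq_of_ne hj]
  · refine Finset.prod_eq_zero (Finset.mem_univ i) ?_
    rw [Matrix.updateRow_ne hij, Matrix.updateRow_self, Pi.single_eq_of_ne h]

lemma delSub_updateRow {W R' : Type*} [DecidableEq W] (A : Matrix W W R') (S : Set W)
    (i : W) (hi : i ∉ S) (r : W → R') :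
    delSub (A.updateRow i r) S
      = (delSub A S).updateRow ⟨i, hi⟩ (fun w => r w.val) := by
  ext w z
  simp [delSub, Matrix.updateRow_apply, Subtype.ext_iff]

lemma single_comp_val {W R' : Type*} [DecidableEq W] [Zero R'] (S : Set W) (i : W)
    (hi : i ∉ S) (c : R') :
    (fun w : {w : W // w ∉ S} => (Pi.single i c : W → R') w.val)
      = Pi.single (⟨i, hi⟩ : {w : W // w ∉ S}) c := by
  funext w
  simp [Pi.single_apply, Subtype.ext_iff]

lemma per_delSub_delSub {W : Type*} [Fintype W] [DecidableEq W] (M : Matrix W W R)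
    (i j : W) (hi : i ∉ ({j} : Set W)) :
    (delSub (delSub M ({j} : Set W))
        ({(⟨i, hi⟩ : {w : W // w ∉ ({j} : Set W)})} : Set {w : W // w ∉ ({j} : Set W)})).per
      = (delSub M ({i, j} : Set W)).per := by
  let e : {w : W // w ∉ ({i, j} : Set W)} ≃
      {w : {x : W // x ∉ ({j} : Set W)} //
        w ∉ ({(⟨i, hi⟩ : {w : W // w ∉ ({j} : Set W)})} : Set {w : W // w ∉ ({j} : Set W)})} :=
    { toFun := fun w => ⟨⟨w.1, fun h => w.2 (Set.mem_insert_iff.mpr (Or.inr h))⟩,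
        fun h => w.2 (Set.mem_insert_iff.mpr (Or.inl (congrArg Subtype.val h)))⟩
      invFun := fun x => ⟨x.1.1, fun h => by
        rcases Set.mem_insert_iff.mp h with h1 | h2
        · exact x.2 (Set.mem_singleton_iff.mpr (Subtype.ext h1))
        · exact x.1.2 h2⟩
      left_inv := fun w => rfl
      right_inv := fun x => rfl }
  rw [← per_submatrix_equiv e (delSub (delSub M ({j} : Set W)) _)]
  congr 1

lemma per_two_single {W : Type*} [Fintype W] [DecidableEq W] (A : Matrix W W R) (i j : W)
    (hij : i ≠ j) (c d : R) :
    ((A.updateRow i (Pi.single i c)).updateRow j (Pi.single j d)).per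
      = c * d * (delSub A ({i, j} : Set W)).per := by
  have hi : i ∉ ({j} : Set W) := by simpa using hij
  rw [per_updateRow_single_self, delSub_updateRow _ _ i hi, single_comp_val,
    per_updateRow_single_self, per_delSub_delSub]
  ring
  exact hi

lemma psi_delSub {W R' : Type*} [Fintype W] [DecidableEq W] [CommRing R']
    (H : Matrix W W (Polynomial R')) (S : Set W)
    [Fintype {w : W // w ∉ S}] [DecidableEq {w : W // w ∉ S}] :
    psi (delSub H S)
      = (delSub ((Polynomial.X : Polynomial R') • (1 : Matrix W W (Polynomial R')) - H) S).per := by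
  unfold psi
  congr 1
  ext w z
  simp [delSub, Matrix.one_apply, Subtype.ext_iff]

end PerLemmas

theorem tree_per_edge_recursion
    {V : Type*} [Fintype V] [DecidableEq V]
    (T : SimpleGraph V) [DecidableRel T.Adj] (hT : T.IsTree) (β γ : ℝ)
    (u v : V) (he : T.Adj u v) :
    psi (hMat β γ T) =
      psi (hMat β γ (T.deleteEdges {s(u, v)}))
        - Polynomial.C β * psi (delSub (hMat β γ (T.deleteEdges {s(u, v)})) {v})
        - Polynomial.C β * psi (delSub (hMat β γ (T.deleteEdges {s(u, v)})) {u})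
        + Polynomial.C (β ^ 2 + γ ^ 2) * psi (delSub (hMat β γ T) {u, v}) := by
  classical
  have huv : u ≠ v := he.ne
  have hvu : v ≠ u := huv.symm
  set T' : SimpleGraph V := T.deleteEdges {s(u, v)} with hT'def
  -- bridge property
  have hbridge : ¬ T'.Reachable u v := by
    have hb := (SimpleGraph.isAcyclic_iff_forall_adj_isBridge.mp hT.2) he
    exact SimpleGraph.isBridge_iff.mp hb
  -- adjacency facts
  have hadj' : ∀ w z : V, T'.Adj w z ↔ T.Adj w z ∧ ¬ s(w, z) = s(u, v) := by
    intro w z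
    rw [hT'def, SimpleGraph.deleteEdges_adj]
    simp
  have hadjuv : ¬ T'.Adj u v := by
    rw [hadj']
    simp
  have hadj_other : ∀ w z : V, ¬(w = u ∧ z = v) → ¬(w = v ∧ z = u) → (T'.Adj w z ↔ T.Adj w z) := by
    intro w z h1 h2
    rw [hadj']
    constructor
    · exact fun h => h.1
    · intro h
      refine ⟨h, fun hs => ?_⟩
      rcases Sym2.eq_iff.mp hs with h3 | h3
      · exact h1 h3
      · exact h2 h3
  -- degree facts
  have hNu : T'.neighborFinset u = (T.neighborFinset u).erase v := by
    ext w
    simp only [SimpleGraph.mem_neighborFinset, Finset.mem_erase, hadj', Sym2.congr_right]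
    tauto
  have hNv : T'.neighborFinset v = (T.neighborFinset v).erase u := by
    ext w
    have : s(v, w) = s(u, v) ↔ w = u := by
      rw [Sym2.eq_iff]
      constructor
      · rintro (⟨h1, h2⟩ | ⟨h1, h2⟩)
        · exact absurd h1 hvu
        · exact h2
      · intro h
        exact Or.inr ⟨rfl, h⟩
    simp only [SimpleGraph.mem_neighborFinset, Finset.mem_erase, hadj', this]
    tauto
  have hdegu : T.degree u = T'.degree u + 1 := by
    rw [SimpleGraph.degree, SimpleGraph.degree, hNu]
    exact (Finset.card_erase_add_one (by rwa [SimpleGraph.mem_neighborFinset])).symm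
  have hdegv : T.degree v = T'.degree v + 1 := by
    rw [SimpleGraph.degree, SimpleGraph.degree, hNv]
    exact (Finset.card_erase_add_one (by rw [SimpleGraph.mem_neighborFinset]; exact he.symm)).symm
  have hdegw : ∀ w : V, w ≠ u → w ≠ v → T'.degree w = T.degree w := by
    intro w hwu hwv
    rw [SimpleGraph.degree, SimpleGraph.degree]
    congr 1
    ext z
    simp only [SimpleGraph.mem_neighborFinset, hadj']
    constructor
    · exact fun h => h.1
    · intro h
      refine ⟨h, fun hs => ?_⟩
      rcases Sym2.eq_iff.mp hs with h3 | h3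
      · exact hwu h3.1
      · exact hwv h3.1
  -- matrices
  set Cb : Polynomial ℝ := Polynomial.C β with hCb
  set Cg : Polynomial ℝ := Polynomial.C γ with hCg
  set M : Matrix V V (Polynomial ℝ) :=
    (Polynomial.X : Polynomial ℝ) • (1 : Matrix V V (Polynomial ℝ)) - hMat β γ T with hMdef
  set M' : Matrix V V (Polynomial ℝ) :=
    (Polynomial.X : Polynomial ℝ) • (1 : Matrix V V (Polynomial ℝ)) - hMat β γ T' with hM'def
  have hMat_app : ∀ (G : SimpleGraph V) [DecidableRel G.Adj] (w z : V),
      hMat β γ G w z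
        = (if w = z then Polynomial.C β * ((G.degree w : ℕ) : Polynomial ℝ) else 0)
          + (if G.Adj w z then Polynomial.C γ else 0) := by
    intro G _ w z
    simp [hMat, degMat, Matrix.diagonal_apply, SimpleGraph.adjMatrix_apply,
      mul_ite, mul_one, mul_zero]
  have hM'supp : ∀ w z : V, M' w z ≠ 0 → z = w ∨ T'.Adj w z := by
    intro w z h
    by_contra hc
    push_neg at hc
    apply h
    rw [hM'def]
    simp only [Matrix.sub_apply, Matrix.smul_apply, Matrix.one_apply]
    rw [hMat_app]
    rw [if_neg (fun hh : w = z => hc.1 hh.symm), if_neg (fun hh : w = z => hc.1 hh.symm),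
      if_neg hc.2]
    simp
  set pu : V → Polynomial ℝ := Pi.single u Cb + Pi.single v Cg with hpu
  set pv : V → Polynomial ℝ := Pi.single v Cb + Pi.single u Cg with hpv
  -- row computations
  have rowo : ∀ w z : V, w ≠ u → w ≠ v → M w z = M' w z := by
    intro w z hwu hwv
    rw [hMdef, hM'def]
    simp only [Matrix.sub_apply, Matrix.smul_apply, Matrix.one_apply]
    rw [hMat_app, hMat_app]
    have hadj : T'.Adj w z ↔ T.Adj w z :=
      hadj_other w z (fun h => hwu h.1) (fun h => hwv h.1)
    rcases eq_or_ne w z with rfl | hwz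
    · rw [hdegw w hwu hwv]
      simp [SimpleGraph.irrefl]
    · simp [hwz, hadj]
  have rowu : ∀ z : V, M u z = M' u z - pu z := by
    intro z
    rw [hMdef, hM'def]
    simp only [Matrix.sub_apply, Matrix.smul_apply, Matrix.one_apply, hpu, Pi.add_apply]
    rw [hMat_app, hMat_app]
    by_cases hzu : z = u
    · subst hzu
      simp only [if_pos rfl, SimpleGraph.irrefl, if_false, Pi.single_eq_same,
        Pi.single_eq_of_ne huv, hdegu]
      push_cast
      rw [hCb]
      ring
    · by_cases hzv : z = v
      · subst hzv
        simp only [if_neg huv, if_pos he, if_neg hadjuv,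
          Pi.single_eq_of_ne hvu, Pi.single_eq_same]
        rw [hCg]
        ring
      · have hadj : T'.Adj u z ↔ T.Adj u z :=
          hadj_other u z (fun h => hzv h.2) (fun h => huv h.1)
        simp only [if_neg (show ¬ u = z from fun h => hzu h.symm), hadj,
          Pi.single_eq_of_ne hzu, Pi.single_eq_of_ne hzv]
        ring
  have rowv : ∀ z : V, M v z = M' v z - pv z := by
    intro z
    rw [hMdef, hM'def]
    simp only [Matrix.sub_apply, Matrix.smul_apply, Matrix.one_apply, hpv, Pi.add_apply]
    rw [hMat_app, hMat_app]
    by_cases hzv : z = v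
    · subst hzv
      simp only [if_pos rfl, SimpleGraph.irrefl, if_false, Pi.single_eq_same,
        Pi.single_eq_of_ne hvu, hdegv]
      push_cast
      rw [hCb]
      ring
    · by_cases hzu : z = u
      · subst hzu
        simp only [if_neg hvu, if_pos he.symm,
          if_neg (show ¬ T'.Adj v z from fun h => hadjuv h.symm),
          Pi.single_eq_of_ne huv, Pi.single_eq_same]
        rw [hCg]
        ring
      · have hadj : T'.Adj v z ↔ T.Adj v z :=
          hadj_other v z (fun h => hvu h.1) (fun h => hzu h.2)
        simp only [if_neg (show ¬ v = z from fun h => hzv h.symm), hadj,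
          Pi.single_eq_of_ne hzu, Pi.single_eq_of_ne hzv]
        ring
  have hM : M = (M'.updateRow u (M' u - pu)).updateRow v (M' v - pv) := by
    refine Matrix.ext fun w z => ?_
    rcases eq_or_ne w v with rfl | hwv
    · rw [Matrix.updateRow_self, Pi.sub_apply]
      exact rowv z
    · rw [Matrix.updateRow_ne hwv]
      rcases eq_or_ne w u with rfl | hwu
      · rw [Matrix.updateRow_self, Pi.sub_apply]
        exact rowu z
      · rw [Matrix.updateRow_ne hwu]
        exact rowo w z hwu hwv
  -- permanent algebra
  have updcomm : ∀ (A : Matrix V V (Polynomial ℝ)) (a b : V → Polynomial ℝ),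
      (A.updateRow u a).updateRow v b = (A.updateRow v b).updateRow u a := by
    intro A a b
    refine Matrix.ext fun w z => ?_
    rcases eq_or_ne w v with h1 | h1
    · rw [h1, Matrix.updateRow_self, Matrix.updateRow_ne hvu, Matrix.updateRow_self]
    · rw [Matrix.updateRow_ne h1]
      rcases eq_or_ne w u with h2 | h2
      · rw [h2, Matrix.updateRow_self, Matrix.updateRow_self]
      · rw [Matrix.updateRow_ne h2, Matrix.updateRow_ne h2, Matrix.updateRow_ne h1]
  have hMper : M.per = M'.per - (M'.updateRow u pu).per - (M'.updateRow v pv).per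
      + ((M'.updateRow u pu).updateRow v pv).per := by
    rw [hM]
    rw [per_updateRow_sub]
    have h1 : (M'.updateRow u (M' u - pu)) v = M' v := Matrix.updateRow_ne hvu
    rw [show (M'.updateRow u (M' u - pu)).updateRow v (M' v)
        = M'.updateRow u (M' u - pu) from by rw [← h1, Matrix.updateRow_eq_self]]
    rw [per_updateRow_sub, Matrix.updateRow_eq_self]
    rw [updcomm M' (M' u - pu) pv, per_updateRow_sub]
    have h2 : (M'.updateRow v pv) u = M' u := Matrix.updateRow_ne huv
    rw [show (M'.updateRow v pv).updateRow u (M' u) = M'.updateRow v pv from by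
      rw [← h2, Matrix.updateRow_eq_self]]
    rw [updcomm M' pu pv]
    ring
  -- zero terms from the bridge property
  have hzero_u : (M'.updateRow u (Pi.single v Cg)).per = 0 := by
    refine per_eq_zero_aux _ {w : V | T'.Reachable u w} u v
      (show T'.Reachable u u from SimpleGraph.Reachable.refl u) hbridge ?_ ?_
    · intro z hz
      by_contra hzv
      apply hz
      show (M'.updateRow u (Pi.single v Cg)) u z = 0
      rw [Matrix.updateRow_self]
      exact Pi.single_eq_of_ne hzv _
    · intro w z hw hz
      have hwu : w ≠ u := fun h => hw (by rw [h]; exact SimpleGraph.Reachable.refl u)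
      rw [Matrix.updateRow_ne hwu] at hz
      intro hzS
      rcases hM'supp w z hz with h | hadj
      · exact hw (h ▸ hzS)
      · exact hw (hzS.trans hadj.symm.reachable)
  have hzero_v : (M'.updateRow v (Pi.single u Cg)).per = 0 := by
    refine per_eq_zero_aux _ {w : V | T'.Reachable v w} v u
      (show T'.Reachable v v from SimpleGraph.Reachable.refl v)
      (fun h => hbridge h.symm) ?_ ?_
    · intro z hz
      by_contra hzu
      apply hz
      show (M'.updateRow v (Pi.single u Cg)) v z = 0
      rw [Matrix.updateRow_self]
      exact Pi.single_eq_of_ne hzu _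
    · intro w z hw hz
      have hwv : w ≠ v := fun h => hw (by rw [h]; exact SimpleGraph.Reachable.refl v)
      rw [Matrix.updateRow_ne hwv] at hz
      intro hzS
      rcases hM'supp w z hz with h | hadj
      · exact hw (h ▸ hzS)
      · exact hw (hzS.trans hadj.symm.reachable)
  have hexp_u : (M'.updateRow u pu).per = Cb * (delSub M' ({u} : Set V)).per := by
    rw [hpu, per_updateRow_add, per_updateRow_single_self, hzero_u, add_zero]
  have hexp_v : (M'.updateRow v pv).per = Cb * (delSub M' ({v} : Set V)).per := by
    rw [hpv, per_updateRow_add, per_updateRow_single_self, hzero_v, add_zero]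
  -- the swapped cross term
  have hswap : ((M'.updateRow u (Pi.single v Cg)).updateRow v (Pi.single u Cg)).per
      = Cg * Cg * (delSub M' ({u, v} : Set V)).per := by
    rw [← per_submatrix_id_perm (Equiv.swap u v)
        ((M'.updateRow u (Pi.single v Cg)).updateRow v (Pi.single u Cg))]
    have sw : ∀ (a b z : V), (Pi.single a Cg : V → Polynomial ℝ) ((Equiv.swap a b) z)
        = (Pi.single b Cg : V → Polynomial ℝ) z := by
      intro a b z
      rw [Pi.single_apply, Pi.single_apply]
      have hiff : (Equiv.swap a b) z = a ↔ z = b := by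
        rw [Equiv.swap_apply_eq_iff, Equiv.swap_apply_left]
      simp [hiff]
    have heq : ((M'.updateRow u (Pi.single v Cg)).updateRow v (Pi.single u Cg)).submatrix
          id ⇑(Equiv.swap u v)
        = ((M'.submatrix id ⇑(Equiv.swap u v)).updateRow u (Pi.single u Cg)).updateRow v
            (Pi.single v Cg) := by
      refine Matrix.ext fun w z => ?_
      show ((M'.updateRow u (Pi.single v Cg)).updateRow v (Pi.single u Cg)) w
          ((Equiv.swap u v) z) = _
      rcases eq_or_ne w v with h1 | h1
      · rw [h1, Matrix.updateRow_self, Matrix.updateRow_self]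
        exact sw u v z
      · rw [Matrix.updateRow_ne h1, Matrix.updateRow_ne h1]
        rcases eq_or_ne w u with h2 | h2
        · rw [h2, Matrix.updateRow_self, Matrix.updateRow_self]
          have h3 := sw v u z
          rwa [Equiv.swap_comm v u] at h3
        · rw [Matrix.updateRow_ne h2, Matrix.updateRow_ne h2]
          rfl
    rw [heq, per_two_single _ _ _ huv]
    congr 2
    refine Matrix.ext fun w z => ?_
    show M' w.val ((Equiv.swap u v) z.val) = M' w.val z.val
    rw [Equiv.swap_apply_of_ne_of_ne (fun h => z.2 (by rw [h]; exact Set.mem_insert _ _))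
      (fun h => z.2 (by rw [h]; exact Set.mem_insert_of_mem _ rfl))]
  have hcross : ((M'.updateRow u pu).updateRow v pv).per
      = (Cb * Cb + Cg * Cg) * (delSub M' ({u, v} : Set V)).per := by
    rw [hpv, per_updateRow_add, updcomm M' pu (Pi.single v Cb),
      updcomm M' pu (Pi.single u Cg), hpu, per_updateRow_add, per_updateRow_add]
    rw [per_pair_same_col M' v u v hvu Cb Cg, per_pair_same_col M' v u u hvu Cg Cb,
      ← updcomm M' (Pi.single u Cb) (Pi.single v Cb),
      ← updcomm M' (Pi.single v Cg) (Pi.single u Cg),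
      per_two_single M' u v huv Cb Cb, hswap]
    ring
  -- the two minors agree
  have hdel_uv : delSub M ({u, v} : Set V) = delSub M' ({u, v} : Set V) := by
    refine Matrix.ext fun w z => ?_
    exact rowo w.val z.val (fun h => w.2 (by rw [h]; exact Set.mem_insert _ _))
      (fun h => w.2 (by rw [h]; exact Set.mem_insert_of_mem _ rfl))
  -- translate the goal
  have g1 : psi (hMat β γ T) = M.per := by unfold psi; rw [hMdef]
  have g2 : psi (hMat β γ T') = M'.per := by unfold psi; rw [hM'def]
  have g3 : psi (delSub (hMat β γ T') ({v} : Set V)) = (delSub M' ({v} : Set V)).per := by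
    rw [psi_delSub, hM'def]
  have g4 : psi (delSub (hMat β γ T') ({u} : Set V)) = (delSub M' ({u} : Set V)).per := by
    rw [psi_delSub, hM'def]
  have g5 : psi (delSub (hMat β γ T) ({u, v} : Set V)) = (delSub M' ({u, v} : Set V)).per := by
    rw [psi_delSub, ← hMdef, hdel_uv]
  rw [g1, g2, g3, g4, g5, hMper, hexp_u, hexp_v, hcross]
  have hC : Polynomial.C (β ^ 2 + γ ^ 2) = Cb * Cb + Cg * Cg := by
    rw [hCb, hCg, map_add, map_pow, map_pow]
    ring
  rw [hC]
  ring
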